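/- For natural numbers c and f ≥ 1, the variance of the distribution p(i) = C(f+c-i, f-1)/C(c+f, c) on i ∈ {1,…,c+1} equals (c+f+1)·c·f / ((f+1)²·(f+2)). -/

import Mathlib

open Finset

lemma S0 (g c : ℕ) : ∑ j ∈ range (c+1), ((g + c - j).choose g : ℚ)
    = ((c + g + 1).choose (g+1) : ℚ) := by
  induction c with
  | zero => simp
  | succ c ih =>
    rw [Finset.sum_range_succ']
    simp only [show ∀ j, g + (c+1) - (j+1) = g + c - j from fun j => by omega]
    rw [ih]
    have pascal : ((c + 1 + g + 1).choose (g+1) : ℚ)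
        = ((c + g + 1).choose g : ℚ) + ((c + g + 1).choose (g+1) : ℚ) := by
      have : c + 1 + g + 1 = (c + g + 1) + 1 := by ring
      rw [this, Nat.choose_succ_succ']; push_cast; ring
    rw [pascal]
    norm_num [show g + (c+1) - 0 = c + g + 1 from by omega]
    ring

lemma S1 (g c : ℕ) : ∑ j ∈ range (c+1), ((j : ℚ)+1) * ((g + c - j).choose g : ℚ)
    = ((c : ℚ) + g + 2)/((g : ℚ)+2) * ((c + g + 1).choose (g+1) : ℚ) := by
  induction c with
  | zero =>
    simp
    field_simp
  | succ c ih =>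
    rw [Finset.sum_range_succ']
    simp only [show ∀ j, g + (c+1) - (j+1) = g + c - j from fun j => by omega,
      show g + (c+1) - 0 = c + g + 1 from by omega]
    push_cast
    have split : ∑ j ∈ range (c+1), ((j:ℚ)+1+1) * ((g + c - j).choose g : ℚ)
        = (∑ j ∈ range (c+1), ((j:ℚ)+1) * ((g + c - j).choose g : ℚ))
          + ∑ j ∈ range (c+1), ((g + c - j).choose g : ℚ) := by
      rw [← Finset.sum_add_distrib]; exact Finset.sum_congr rfl fun j _ => by ring
    rw [split, ih, S0]
    have pascal : ((c + 1 + g + 1).choose (g+1) : ℚ)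
        = ((c + g + 1).choose g : ℚ) + ((c + g + 1).choose (g+1) : ℚ) := by
      have : c + 1 + g + 1 = (c + g + 1) + 1 := by ring
      rw [this, Nat.choose_succ_succ']; push_cast; ring
    have absorb : ((c + g + 1).choose (g+1) : ℚ) * ((g:ℚ)+1)
        = ((c + g + 1).choose g : ℚ) * ((c:ℚ)+1) := by
      have h := Nat.choose_succ_right_eq (c + g + 1) g
      have h2 : c + g + 1 - g = c + 1 := by omega
      rw [h2] at h
      exact_mod_cast congrArg (Nat.cast : ℕ → ℚ) h
    rw [pascal]
    have hg1 : ((g:ℚ)+1) ≠ 0 := by positivity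
    have hg2 : ((g:ℚ)+2) ≠ 0 := by positivity
    have hY : ((c + g + 1).choose (g+1) : ℚ)
        = ((c + g + 1).choose g : ℚ) * ((c:ℚ)+1) / ((g:ℚ)+1) := by
      field_simp; linarith [absorb]
    rw [hY]
    field_simp
    ring

lemma S2 (g c : ℕ) : ∑ j ∈ range (c+1), ((j : ℚ)+1)^2 * ((g + c - j).choose g : ℚ)
    = (((c:ℚ)+1)^2 - (2*(c:ℚ)+1)*((g:ℚ)+1)*(c:ℚ)/((g:ℚ)+2)
        + ((g:ℚ)+1)*(c:ℚ)*((c:ℚ)-1)/((g:ℚ)+3)) * ((c + g + 1).choose (g+1) : ℚ) := by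
  induction c with
  | zero =>
    simp
  | succ c ih =>
    rw [Finset.sum_range_succ']
    simp only [show ∀ j, g + (c+1) - (j+1) = g + c - j from fun j => by omega,
      show g + (c+1) - 0 = c + g + 1 from by omega]
    push_cast
    have split : ∑ j ∈ range (c+1), ((j:ℚ)+1+1)^2 * ((g + c - j).choose g : ℚ)
        = (∑ j ∈ range (c+1), ((j:ℚ)+1)^2 * ((g + c - j).choose g : ℚ))
          + 2 * (∑ j ∈ range (c+1), ((j:ℚ)+1) * ((g + c - j).choose g : ℚ))
          + ∑ j ∈ range (c+1), ((g + c - j).choose g : ℚ) := by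
      rw [Finset.mul_sum, ← Finset.sum_add_distrib, ← Finset.sum_add_distrib]
      exact Finset.sum_congr rfl fun j _ => by ring
    rw [split, ih, S1, S0]
    have pascal : ((c + 1 + g + 1).choose (g+1) : ℚ)
        = ((c + g + 1).choose g : ℚ) + ((c + g + 1).choose (g+1) : ℚ) := by
      have : c + 1 + g + 1 = (c + g + 1) + 1 := by ring
      rw [this, Nat.choose_succ_succ']; push_cast; ring
    have absorb : ((c + g + 1).choose (g+1) : ℚ) * ((g:ℚ)+1)
        = ((c + g + 1).choose g : ℚ) * ((c:ℚ)+1) := by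
      have h := Nat.choose_succ_right_eq (c + g + 1) g
      have h2 : c + g + 1 - g = c + 1 := by omega
      rw [h2] at h
      exact_mod_cast congrArg (Nat.cast : ℕ → ℚ) h
    rw [pascal]
    have hg1 : ((g:ℚ)+1) ≠ 0 := by positivity
    have hg2 : ((g:ℚ)+2) ≠ 0 := by positivity
    have hg3 : ((g:ℚ)+3) ≠ 0 := by positivity
    have hY : ((c + g + 1).choose (g+1) : ℚ)
        = ((c + g + 1).choose g : ℚ) * ((c:ℚ)+1) / ((g:ℚ)+1) := by
      field_simp; linarith [absorb]
    rw [hY]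
    field_simp
    ring


/-- The variance of the single-man request distribution `p(i) = C(f+c-i, f-1)/C(c+f, c)`
on `{1, …, c+1}` equals `(c+f+1)·c·f / ((f+1)²·(f+2))`. -/
theorem single_man_variance (c f : ℕ) (hf : 1 ≤ f) :
    ∑ i ∈ Finset.Icc 1 (c + 1),
        ((i : ℚ) - ((c : ℚ) + f + 1) / ((f : ℚ) + 1)) ^ 2 *
          ((Nat.choose (f + c - i) (f - 1) : ℚ) / (Nat.choose (c + f) c : ℚ)) =
      (((c : ℚ) + f + 1) * c * f) / (((f : ℚ) + 1) ^ 2 * ((f : ℚ) + 2)) := by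
  obtain ⟨g, rfl⟩ : ∃ g, f = g + 1 := ⟨f - 1, by omega⟩
  have hIcc : Finset.Icc 1 (c+1) = Finset.Ico 1 (c+2) := by ext x; simp [Nat.lt_succ_iff]
  rw [hIcc, Finset.sum_Ico_eq_sum_range, show c + 2 - 1 = c + 1 from rfl]
  have hidx : ∀ k, g + 1 + c - (1 + k) = g + c - k := fun k => by omega
  have hN : ((c + (g+1)).choose c : ℚ) = ((c + g + 1).choose (g+1) : ℚ) := by
    norm_cast
    rw [show c + (g+1) = c + g + 1 from by ring,
      ← Nat.choose_symm (show c ≤ c + g + 1 by omega)]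
    congr 1
    omega
  have hNne : ((c + g + 1).choose (g+1) : ℚ) ≠ 0 :=
    Nat.cast_ne_zero.mpr (Nat.choose_pos (show g+1 ≤ c+g+1 by omega)).ne'
  set N : ℚ := ((c + g + 1).choose (g+1) : ℚ) with hNdef
  set μ : ℚ := ((c:ℚ) + ((g+1 : ℕ) : ℚ) + 1) / (((g+1 : ℕ) : ℚ) + 1) with hμ
  have step1 : ∑ k ∈ Finset.range (c + 1),
      (((1 + k : ℕ) : ℚ) - μ) ^ 2 *
        ((Nat.choose (g + 1 + c - (1 + k)) (g + 1 - 1) : ℚ) / ((c + (g+1)).choose c : ℚ))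
      = ((∑ k ∈ range (c+1), ((k:ℚ)+1)^2 * ((g + c - k).choose g : ℚ))
        - 2 * μ * (∑ k ∈ range (c+1), ((k:ℚ)+1) * ((g + c - k).choose g : ℚ))
        + μ^2 * (∑ k ∈ range (c+1), ((g + c - k).choose g : ℚ))) / N := by
    rw [Finset.mul_sum, Finset.mul_sum, ← Finset.sum_sub_distrib, ← Finset.sum_add_distrib,
      Finset.sum_div]
    refine Finset.sum_congr rfl fun k _ => ?_
    rw [hidx k, hN, show g + 1 - 1 = g from rfl]
    push_cast
    ring
  rw [step1, S2, S1, S0]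
  have hg1 : ((g:ℚ)+1) ≠ 0 := by positivity
  have hg2 : ((g:ℚ)+2) ≠ 0 := by positivity
  have hg3 : ((g:ℚ)+3) ≠ 0 := by positivity
  rw [hμ, hNdef]
  push_cast
  have hNne' : ((c + g + 1).choose (g+1) : ℚ) ≠ 0 := hNne
  field_simp
  ring
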